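/- For integers n ≥ 2 and t ≥ 1, the domination number of the Sierpiński graph S(K_n,t) equals (n^t + n)/(n+1) when t is even and (n^t + 1)/(n+1) when t is odd. -/

import Mathlib

variable {V : Type*}

/-- A Roman dominating function: every vertex with value 0 has a neighbor with value 2. -/
def IsRDF (G : SimpleGraph V) (f : V → Fin 3) : Prop :=
  ∀ v, f v = 0 → ∃ u, G.Adj u v ∧ f u = 2

/-- The weight of a Roman dominating function. -/
def romanWeight [Fintype V] (f : V → Fin 3) : ℕ := ∑ v, (f v : ℕ)

/-- The Roman domination number. -/
noncomputable def gammaR [Fintype V] (G : SimpleGraph V) : ℕ :=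
  sInf {k | ∃ f : V → Fin 3, IsRDF G f ∧ romanWeight f = k}

/-- A dominating set. -/
def IsDomSet (G : SimpleGraph V) (D : Set V) : Prop :=
  ∀ v, v ∈ D ∨ ∃ u ∈ D, G.Adj u v

/-- The domination number. -/
noncomputable def gamma [Fintype V] (G : SimpleGraph V) : ℕ :=
  sInf {k | ∃ D : Set V, IsDomSet G D ∧ D.ncard = k}

/-- The generalized Sierpiński graph `S(G,t)` on words of length `t` over `V`. -/
def sierpinski (G : SimpleGraph V) (t : ℕ) : SimpleGraph (Fin t → V) where
  Adj x y := ∃ i : Fin t, (∀ j, j < i → x j = y j) ∧ G.Adj (x i) (y i) ∧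
    (∀ j, i < j → x j = y i ∧ y j = x i)
  symm := by
    refine ⟨?_⟩
    rintro x y ⟨i, h1, h2, h3⟩
    exact ⟨i, fun j hj => (h1 j hj).symm, h2.symm, fun j hj => ⟨(h3 j hj).2, (h3 j hj).1⟩⟩
  loopless := by
    refine ⟨?_⟩
    rintro x ⟨i, -, h2, -⟩
    exact G.loopless.irrefl _ h2


namespace S16

abbrev W (n t : ℕ) := Fin t → Fin n
abbrev SG (n t : ℕ) := sierpinski (SimpleGraph.completeGraph (Fin n)) t

lemma sg_adj {n t : ℕ} {x y : W n t} : (SG n t).Adj x y ↔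
    ∃ i : Fin t, (∀ j, j < i → x j = y j) ∧ x i ≠ y i ∧
    (∀ j, i < j → x j = y i ∧ y j = x i) := by
  simp only [SG, sierpinski, SimpleGraph.completeGraph, SimpleGraph.top_adj]

lemma cons_const {n t : ℕ} (u : Fin n) :
    (Fin.cons u (fun _ => u) : W n (t+1)) = fun _ => u := by
  funext i
  refine Fin.cases ?_ ?_ i <;> simp

lemma adj_cons {n t : ℕ} {u v : Fin n} {x y : W n t} :
    (SG n (t+1)).Adj (Fin.cons u x) (Fin.cons v y) ↔
      (u = v ∧ (SG n t).Adj x y) ∨ (u ≠ v ∧ x = (fun _ => v) ∧ y = (fun _ => u)) := by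
  rw [sg_adj]
  constructor
  · rintro ⟨i, h1, h2, h3⟩
    refine Fin.cases ?_ ?_ i h1 h2 h3 <;> clear h1 h2 h3 i
    · intro h1 h2 h3
      refine Or.inr ⟨by simpa using h2, ?_, ?_⟩
      · funext k
        have := (h3 k.succ (Fin.succ_pos k)).1
        simpa using this
      · funext k
        have := (h3 k.succ (Fin.succ_pos k)).2
        simpa using this
    · intro i h1 h2 h3
      refine Or.inl ⟨by simpa using h1 0 (Fin.succ_pos i), ?_⟩
      rw [sg_adj]
      refine ⟨i, fun j hj => ?_, by simpa using h2, fun j hj => ?_⟩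
      · have := h1 j.succ (by simpa [Fin.succ_lt_succ_iff] using hj)
        simpa using this
      · have := h3 j.succ (by simpa [Fin.succ_lt_succ_iff] using hj)
        simpa using this
  · rintro (⟨rfl, h⟩ | ⟨hne, rfl, rfl⟩)
    · rw [sg_adj] at h
      obtain ⟨i, h1, h2, h3⟩ := h
      refine ⟨i.succ, fun j hj => ?_, by simpa using h2, fun j hj => ?_⟩
      · refine Fin.cases ?_ ?_ j hj <;> clear hj j
        · intro _; simp
        · intro j hj
          have := h1 j (by simpa [Fin.succ_lt_succ_iff] using hj)
          simpa using this
      · refine Fin.cases ?_ ?_ j hj <;> clear hj j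
        · intro hj; exact absurd hj (by simp [Fin.lt_def])
        · intro j hj
          have := h3 j (by simpa [Fin.succ_lt_succ_iff] using hj)
          simpa using this
    · refine ⟨0, fun j hj => absurd hj (by simp [Fin.lt_def]), by simpa using hne, fun j hj => ?_⟩
      refine Fin.cases ?_ ?_ j hj <;> clear hj j
      · intro hj; exact absurd hj (by simp [Fin.lt_def])
      · intro j hj; simp

lemma degree_le {n t : ℕ} (hn : 1 ≤ n) (c : W n t) [DecidablePred ((SG n t).Adj c)] :
    (Finset.univ.filter ((SG n t).Adj c)).card ≤ n := by
  classical
  have hcard : (Finset.univ : Finset (Fin n)).card = n := by simp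
  have hc : ∀ y, (SG n t).Adj c y → ∃ i : Fin t, (∀ j, j < i → c j = y j) ∧ c i ≠ y i ∧
      (∀ j, i < j → c j = y i ∧ y j = c i) := fun y h => sg_adj.mp h
  let idx : (y : W n t) → (SG n t).Adj c y → Fin t := fun y h => (hc y h).choose
  let f : W n t → Fin n := fun y =>
    if h : (SG n t).Adj c y then y (idx y h) else ⟨0, hn⟩
  refine le_of_le_of_eq (Finset.card_le_card_of_injOn f (fun _ _ => Finset.mem_univ _) ?_) hcard
  intro y hy z hz hfyz
  simp only [Finset.coe_filter, Set.mem_setOf_eq, Finset.mem_univ, true_and] at hy hz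
  have hsy := (hc y hy).choose_spec
  have hsz := (hc z hz).choose_spec
  simp only [f, idx, dif_pos hy, dif_pos hz] at hfyz
  generalize hgi : (hc y hy).choose = i at hsy hfyz
  generalize hgi' : (hc z hz).choose = i' at hsz hfyz
  obtain ⟨h1y, h2y, h3y⟩ := hsy
  obtain ⟨h1z, h2z, h3z⟩ := hsz
  rcases lt_trichotomy i i' with hlt | heq | hlt
  · exact absurd ((h3y i' hlt).1.trans hfyz) h2z
  · subst heq
    funext j
    rcases lt_trichotomy j i with hj | rfl | hj
    · rw [← h1y j hj, h1z j hj]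
    · exact hfyz
    · rw [(h3y j hj).2, (h3z j hj).2]
  · exact absurd ((h3z i hlt).1.trans hfyz.symm) h2y

lemma lower_bound {n t : ℕ} (hn : 1 ≤ n) (D : Set (W n t)) (hD : IsDomSet (SG n t) D) :
    n ^ t ≤ (n + 1) * D.ncard := by
  classical
  have hfin : D.Finite := Set.toFinite D
  set F := hfin.toFinset with hF
  let nb : W n t → Finset (W n t) := fun c => insert c (Finset.univ.filter ((SG n t).Adj c))
  have hsub : (Finset.univ : Finset (W n t)) ⊆ F.biUnion nb := by
    intro x _
    rcases hD x with hx | ⟨c, hc, hadj⟩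
    · exact Finset.mem_biUnion.2 ⟨x, hfin.mem_toFinset.2 hx, Finset.mem_insert_self _ _⟩
    · exact Finset.mem_biUnion.2 ⟨c, hfin.mem_toFinset.2 hc,
        Finset.mem_insert.2 (Or.inr (by simp [hadj]))⟩
  have h1 : n ^ t = (Finset.univ : Finset (W n t)).card := by
    rw [Finset.card_univ]
    simp [Fintype.card_fun]
  have h2 : (F.biUnion nb).card ≤ F.card * (n + 1) := by
    refine (Finset.card_biUnion_le).trans ?_
    have : ∀ c ∈ F, (nb c).card ≤ n + 1 := by
      intro c _
      refine (Finset.card_insert_le _ _).trans ?_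
      exact Nat.add_le_add_right (degree_le hn c) 1
    calc ∑ c ∈ F, (nb c).card ≤ ∑ _c ∈ F, (n+1) := Finset.sum_le_sum this
      _ = F.card * (n+1) := by rw [Finset.sum_const, smul_eq_mul]
  have h3 : D.ncard = F.card := Set.ncard_eq_toFinset_card _ hfin
  calc n ^ t = _ := h1
    _ ≤ _ := Finset.card_le_card hsub
    _ ≤ F.card * (n+1) := h2
    _ = (n+1) * D.ncard := by rw [h3, Nat.mul_comm]

structure Code (n t : ℕ) where
  A : Fin n → Finset (W n t)
  B : Finset (W n t)
  C : Finset (W n t)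
  D : Fin n → Finset (W n t)

def codes (n : ℕ) : (t : ℕ) → Code n t
  | 0 => ⟨fun _ => Finset.univ, ∅, Finset.univ, fun _ => ∅⟩
  | t+1 =>
    let p := codes n t
    { A := fun u => p.C.image (Fin.cons u) ∪
        (Finset.univ.erase u).biUnion (fun v => (p.D u).image (Fin.cons v)),
      B := Finset.univ.biUnion (fun v => (p.D v).image (Fin.cons v)),
      C := Finset.univ.biUnion (fun v => (p.A v).image (Fin.cons v)),
      D := fun u => p.B.image (Fin.cons u) ∪
        (Finset.univ.erase u).biUnion (fun v => (p.A u).image (Fin.cons v)) }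

lemma codes_succ_A (n t : ℕ) (u : Fin n) : (codes n (t+1)).A u =
    (codes n t).C.image (Fin.cons u) ∪
      (Finset.univ.erase u).biUnion (fun v => ((codes n t).D u).image (Fin.cons v)) := rfl

lemma codes_succ_B (n t : ℕ) : (codes n (t+1)).B =
    Finset.univ.biUnion (fun v => ((codes n t).D v).image (Fin.cons v)) := rfl

lemma codes_succ_C (n t : ℕ) : (codes n (t+1)).C =
    Finset.univ.biUnion (fun v => ((codes n t).A v).image (Fin.cons v)) := rfl

lemma codes_succ_D (n t : ℕ) (u : Fin n) : (codes n (t+1)).D u =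
    (codes n t).B.image (Fin.cons u) ∪
      (Finset.univ.erase u).biUnion (fun v => ((codes n t).A u).image (Fin.cons v)) := rfl

def Dom {n t : ℕ} (c : Finset (W n t)) (S : Set (W n t)) : Prop :=
  ∀ x ∈ S, x ∈ c ∨ ∃ y ∈ c, (SG n t).Adj y x

lemma cons_eq_const_iff {n t : ℕ} {v u : Fin n} {y : W n t} :
    (Fin.cons v y = fun _ => u) ↔ (v = u ∧ y = fun _ => u) := by
  constructor
  · intro h
    constructor
    · have := congrFun h 0; simpa using this
    · funext k; have := congrFun h k.succ; simpa using this
  · rintro ⟨rfl, rfl⟩; exact cons_const v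

lemma codes_dom (n : ℕ) (hn : 1 ≤ n) : ∀ t,
    (∀ u, Dom ((codes n t).A u) Set.univ) ∧
    (∀ u, (fun _ => u) ∈ (codes n t).A u) ∧
    Dom ((codes n t).C) Set.univ ∧
    (∀ w, (fun _ => w) ∈ (codes n t).C) ∧
    (∀ u, Dom ((codes n t).D u) {x | x ≠ fun _ => u}) ∧
    Dom ((codes n t).B) {x | ¬ ∃ w, x = fun _ => w} := by
  intro t
  induction t with
  | zero =>
    refine ⟨fun u x _ => Or.inl (Finset.mem_univ _), fun u => Finset.mem_univ _,
      fun x _ => Or.inl (Finset.mem_univ _), fun w => Finset.mem_univ _,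
      fun u x hx => ?_, fun x hx => ?_⟩
    · exact absurd (funext fun i => i.elim0) hx
    · exact absurd ⟨⟨0, hn⟩, funext fun i => i.elim0⟩ hx
  | succ t ih =>
    obtain ⟨ihA, ihAc, ihC, ihCc, ihD, ihB⟩ := ih
    have decomp : ∀ x : W n (t+1), ∃ v y, x = Fin.cons v y :=
      fun x => ⟨x 0, Fin.tail x, (Fin.cons_self_tail x).symm⟩
    refine ⟨?_, ?_, ?_, ?_, ?_, ?_⟩
    · -- A (t+1) u dominates univ
      intro u x _
      obtain ⟨v, y, rfl⟩ := decomp x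
      rw [codes_succ_A]
      by_cases hv : v = u
      · subst hv
        rcases ihC y trivial with hm | ⟨c, hc, hadj⟩
        · exact Or.inl (Finset.mem_union_left _ (Finset.mem_image_of_mem _ hm))
        · exact Or.inr ⟨Fin.cons v c, Finset.mem_union_left _ (Finset.mem_image_of_mem _ hc),
            adj_cons.mpr (Or.inl ⟨rfl, hadj⟩)⟩
      · by_cases hyu : y = fun _ => u
        · subst hyu
          exact Or.inr ⟨Fin.cons u (fun _ => v),
            Finset.mem_union_left _ (Finset.mem_image_of_mem _ (ihCc v)),
            adj_cons.mpr (Or.inr ⟨fun h => hv h.symm, rfl, rfl⟩)⟩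
        · rcases ihD u y hyu with hm | ⟨c, hc, hadj⟩
          · exact Or.inl (Finset.mem_union_right _ (Finset.mem_biUnion.2
              ⟨v, Finset.mem_erase.2 ⟨hv, Finset.mem_univ _⟩, Finset.mem_image_of_mem _ hm⟩))
          · exact Or.inr ⟨Fin.cons v c, Finset.mem_union_right _ (Finset.mem_biUnion.2
              ⟨v, Finset.mem_erase.2 ⟨hv, Finset.mem_univ _⟩, Finset.mem_image_of_mem _ hc⟩),
              adj_cons.mpr (Or.inl ⟨rfl, hadj⟩)⟩
    · -- const u ∈ A (t+1) u
      intro u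
      rw [codes_succ_A]
      refine Finset.mem_union_left _ ?_
      rw [← cons_const u]
      exact Finset.mem_image_of_mem _ (ihCc u)
    · -- C (t+1) dominates univ
      intro x _
      obtain ⟨v, y, rfl⟩ := decomp x
      rw [codes_succ_C]
      rcases ihA v y trivial with hm | ⟨c, hc, hadj⟩
      · exact Or.inl (Finset.mem_biUnion.2 ⟨v, Finset.mem_univ _, Finset.mem_image_of_mem _ hm⟩)
      · exact Or.inr ⟨Fin.cons v c, Finset.mem_biUnion.2
          ⟨v, Finset.mem_univ _, Finset.mem_image_of_mem _ hc⟩,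
          adj_cons.mpr (Or.inl ⟨rfl, hadj⟩)⟩
    · -- const w ∈ C (t+1)
      intro w
      rw [codes_succ_C]
      refine Finset.mem_biUnion.2 ⟨w, Finset.mem_univ _, ?_⟩
      rw [← cons_const w]
      exact Finset.mem_image_of_mem _ (ihAc w)
    · -- D (t+1) u dominates complement of const u
      intro u x hx
      obtain ⟨v, y, rfl⟩ := decomp x
      rw [codes_succ_D]
      by_cases hv : v = u
      · subst hv
        by_cases hcst : ∃ w, y = fun _ => w
        · obtain ⟨w, hw⟩ := hcst
          subst hw
          have hwu : w ≠ v := by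
            rintro rfl
            exact hx (cons_const w)
          exact Or.inr ⟨Fin.cons w (fun _ => v), Finset.mem_union_right _ (Finset.mem_biUnion.2
            ⟨w, Finset.mem_erase.2 ⟨hwu, Finset.mem_univ _⟩, Finset.mem_image_of_mem _ (ihAc v)⟩),
            adj_cons.mpr (Or.inr ⟨hwu, rfl, rfl⟩)⟩
        · rcases ihB y hcst with hm | ⟨c, hc, hadj⟩
          · exact Or.inl (Finset.mem_union_left _ (Finset.mem_image_of_mem _ hm))
          · exact Or.inr ⟨Fin.cons v c, Finset.mem_union_left _ (Finset.mem_image_of_mem _ hc),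
              adj_cons.mpr (Or.inl ⟨rfl, hadj⟩)⟩
      · rcases ihA u y trivial with hm | ⟨c, hc, hadj⟩
        · exact Or.inl (Finset.mem_union_right _ (Finset.mem_biUnion.2
            ⟨v, Finset.mem_erase.2 ⟨hv, Finset.mem_univ _⟩, Finset.mem_image_of_mem _ hm⟩))
        · exact Or.inr ⟨Fin.cons v c, Finset.mem_union_right _ (Finset.mem_biUnion.2
            ⟨v, Finset.mem_erase.2 ⟨hv, Finset.mem_univ _⟩, Finset.mem_image_of_mem _ hc⟩),
            adj_cons.mpr (Or.inl ⟨rfl, hadj⟩)⟩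
    · -- B (t+1) dominates nonconstant vertices
      intro x hx
      obtain ⟨v, y, rfl⟩ := decomp x
      rw [codes_succ_B]
      have htl : y ≠ fun _ => v := by
        intro h
        subst h
        exact hx ⟨v, cons_const v⟩
      rcases ihD v y htl with hm | ⟨c, hc, hadj⟩
      · exact Or.inl (Finset.mem_biUnion.2 ⟨v, Finset.mem_univ _, Finset.mem_image_of_mem _ hm⟩)
      · exact Or.inr ⟨Fin.cons v c, Finset.mem_biUnion.2
          ⟨v, Finset.mem_univ _, Finset.mem_image_of_mem _ hc⟩,
          adj_cons.mpr (Or.inl ⟨rfl, hadj⟩)⟩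

lemma cons_inj {n t : ℕ} (v : Fin n) :
    Function.Injective (fun w : W n t => (Fin.cons v w : W n (t+1))) :=
  fun a b h => by
    funext i
    have := congrFun h i.succ
    simpa using this

lemma card_image_cons {n t : ℕ} (v : Fin n) (Y : Finset (W n t)) :
    ((Y.image (Fin.cons v) : Finset (W n (t+1)))).card = Y.card :=
  Finset.card_image_of_injective _ (cons_inj v)

lemma card_biUnion_cons {n t : ℕ} (s : Finset (Fin n)) (Y : Fin n → Finset (W n t)) :
    (s.biUnion (fun v => ((Y v).image (Fin.cons v) : Finset (W n (t+1))))).card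
      = ∑ v ∈ s, (Y v).card := by
  rw [Finset.card_biUnion]
  · exact Finset.sum_congr rfl fun v _ => card_image_cons v (Y v)
  · intro a _ b _ hab
    rw [Function.onFun, Finset.disjoint_left]
    rintro z hza hzb
    obtain ⟨w, _, rfl⟩ := Finset.mem_image.1 hza
    obtain ⟨w', _, hww'⟩ := Finset.mem_image.1 hzb
    apply hab
    have := congrFun hww' 0
    simpa using this.symm

lemma disj_head {n t : ℕ} (u : Fin n) (X : Finset (W n t)) (Y : Fin n → Finset (W n t)) :
    Disjoint (X.image (Fin.cons u) : Finset (W n (t+1)))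
      ((Finset.univ.erase u).biUnion (fun v => (Y v).image (Fin.cons v))) := by
  rw [Finset.disjoint_left]
  rintro z hz hz'
  obtain ⟨w, _, rfl⟩ := Finset.mem_image.1 hz
  obtain ⟨v, hv, hv'⟩ := Finset.mem_biUnion.1 hz'
  obtain ⟨w', _, hww'⟩ := Finset.mem_image.1 hv'
  have := congrFun hww' 0
  simp only [Fin.cons_zero] at this
  exact (Finset.mem_erase.1 hv).1 this

lemma card_erase_univ {n : ℕ} (u : Fin n) :
    (Finset.univ.erase u).card = n - 1 := by
  rw [Finset.card_erase_of_mem (Finset.mem_univ u)]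
  simp

lemma codes_card_succ_A (n t : ℕ) (u : Fin n) :
    ((codes n (t+1)).A u).card = (codes n t).C.card + (n - 1) * ((codes n t).D u).card := by
  rw [codes_succ_A, Finset.card_union_of_disjoint (disj_head u _ _), card_biUnion_cons,
    card_image_cons, Finset.sum_const, card_erase_univ, smul_eq_mul]

lemma codes_card_succ_B (n t : ℕ) :
    ((codes n (t+1)).B).card = ∑ v, ((codes n t).D v).card := by
  rw [codes_succ_B, card_biUnion_cons]

lemma codes_card_succ_C (n t : ℕ) :
    ((codes n (t+1)).C).card = ∑ v, ((codes n t).A v).card := by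
  rw [codes_succ_C, card_biUnion_cons]

lemma codes_card_succ_D (n t : ℕ) (u : Fin n) :
    ((codes n (t+1)).D u).card = (codes n t).B.card + (n - 1) * ((codes n t).A u).card := by
  rw [codes_succ_D, Finset.card_union_of_disjoint (disj_head u _ _), card_biUnion_cons,
    card_image_cons, Finset.sum_const, card_erase_univ, smul_eq_mul]

lemma codes_card (n : ℕ) (hn : 1 ≤ n) : ∀ t,
    (Even t → ((n+1) * (codes n t).C.card = n ^ t + n ∧
      ∀ u, (n+1) * ((codes n t).D u).card + 1 = n ^ t)) ∧
    (Odd t → ((∀ u, (n+1) * ((codes n t).A u).card = n ^ t + 1) ∧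
      (n+1) * (codes n t).B.card + n = n ^ t)) := by
  obtain ⟨m, rfl⟩ : ∃ m, n = m + 1 := ⟨n - 1, by omega⟩
  intro t
  induction t with
  | zero =>
    constructor
    · intro _
      constructor
      · show (m + 1 + 1) * (Finset.univ : Finset (W (m+1) 0)).card = _
        simp [Fintype.card_fun]
        omega
      · intro u
        show (m + 1 + 1) * (∅ : Finset (W (m+1) 0)).card + 1 = _
        simp
    · intro h
      exact absurd h (by simp)
  | succ t ih =>
    obtain ⟨ihE, ihO⟩ := ih
    constructor
    · -- t+1 even, so t odd
      intro hev
      have hodd : Odd t := Nat.odd_iff.mpr (by have := Nat.even_iff.mp hev; omega)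
      obtain ⟨hA, hB⟩ := ihO hodd
      constructor
      · rw [codes_card_succ_C, Finset.mul_sum]
        calc ∑ v : Fin (m+1), (m+1+1) * ((codes (m+1) t).A v).card
            = ∑ _v : Fin (m+1), ((m+1) ^ t + 1) := Finset.sum_congr rfl fun v _ => hA v
          _ = (m+1) * ((m+1) ^ t + 1) := by rw [Finset.sum_const, Finset.card_univ]; simp
          _ = (m+1) ^ (t+1) + (m+1) := by ring
      · intro u
        have hA' := hA u
        rw [codes_card_succ_D]
        have hm1 : m + 1 - 1 = m := by omega
        rw [hm1]
        have expand : (m+1+1) * ((codes (m+1) t).B.card + m * ((codes (m+1) t).A u).card) + 1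
            = ((m+1+1) * (codes (m+1) t).B.card) + m * ((m+1+1) * ((codes (m+1) t).A u).card) + 1 := by
          ring
        rw [expand, hA', show (m+1) ^ (t+1) = (m+1) * ((m+1) ^ t) from by ring, ← hB]
        ring
    · -- t+1 odd, so t even
      intro hodd
      have hev : Even t := Nat.even_iff.mpr (by have := Nat.odd_iff.mp hodd; omega)
      obtain ⟨hC, hD⟩ := ihE hev
      constructor
      · intro u
        have hD' := hD u
        rw [codes_card_succ_A]
        have hm1 : m + 1 - 1 = m := by omega
        rw [hm1]
        have expand : (m+1+1) * ((codes (m+1) t).C.card + m * ((codes (m+1) t).D u).card)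
            = (m+1+1) * (codes (m+1) t).C.card + m * ((m+1+1) * ((codes (m+1) t).D u).card) := by
          ring
        rw [expand, hC, show (m+1) ^ (t+1) = (m+1) * ((m+1) ^ t) from by ring, ← hD']
        ring
      · rw [codes_card_succ_B, Finset.mul_sum]
        calc (∑ v : Fin (m+1), (m+1+1) * ((codes (m+1) t).D v).card) + (m+1)
            = ∑ v : Fin (m+1), ((m+1+1) * ((codes (m+1) t).D v).card + 1) := by
              rw [Finset.sum_add_distrib, Finset.sum_const, Finset.card_univ]
              simp
          _ = ∑ _v : Fin (m+1), (m+1) ^ t := Finset.sum_congr rfl fun v _ => hD v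
          _ = (m+1) ^ (t+1) := by
              rw [Finset.sum_const, Finset.card_univ, Fintype.card_fin, smul_eq_mul]
              ring

end S16

theorem stmt16 (n t : ℕ) (hn : 2 ≤ n) (ht : 1 ≤ t) :
    (Even t → (n + 1) * gamma (sierpinski (SimpleGraph.completeGraph (Fin n)) t) = n ^ t + n) ∧
    (Odd t → (n + 1) * gamma (sierpinski (SimpleGraph.completeGraph (Fin n)) t) = n ^ t + 1) := by
  classical
  have hn1 : 1 ≤ n := by omega
  set G := sierpinski (SimpleGraph.completeGraph (Fin n)) t with hG
  have hgam : gamma G = sInf {k | ∃ D : Set (Fin t → Fin n), IsDomSet G D ∧ D.ncard = k} := rfl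
  have hne : {k | ∃ D : Set (Fin t → Fin n), IsDomSet G D ∧ D.ncard = k}.Nonempty :=
    ⟨(Set.univ : Set (Fin t → Fin n)).ncard, Set.univ, fun v => Or.inl trivial, rfl⟩
  obtain ⟨D, hD, hDcard⟩ := Nat.sInf_mem hne
  rw [← hgam] at hDcard
  have hlow : n ^ t ≤ (n + 1) * gamma G := by
    rw [← hDcard]
    exact S16.lower_bound hn1 D hD
  have upper : ∀ c : Finset (Fin t → Fin n), S16.Dom c Set.univ → gamma G ≤ c.card := by
    intro c hc
    rw [hgam]
    apply Nat.sInf_le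
    refine ⟨(c : Set (Fin t → Fin n)), ?_, Set.ncard_coe_finset c⟩
    intro v
    rcases hc v trivial with h | ⟨y, hy, hadj⟩
    · exact Or.inl h
    · exact Or.inr ⟨y, hy, hadj⟩
  have hdom := S16.codes_dom n hn1 t
  have hcard := S16.codes_card n hn1 t
  constructor
  · intro hev
    obtain ⟨hC, -⟩ := hcard.1 hev
    have hub : gamma G ≤ (S16.codes n t).C.card := upper _ hdom.2.2.1
    have h2 : (S16.codes n t).C.card ≤ gamma G := by
      by_contra h
      push_neg at h
      have hmul : (n+1) * (gamma G + 1) ≤ (n+1) * (S16.codes n t).C.card :=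
        Nat.mul_le_mul_left _ h
      rw [hC, Nat.mul_add, Nat.mul_one] at hmul
      generalize hP : (n+1) * gamma G = P at hmul hlow
      generalize hN : n ^ t = N at hmul hlow
      omega
    rw [show gamma G = (S16.codes n t).C.card from le_antisymm hub h2]
    exact hC
  · intro hodd
    obtain ⟨hA, -⟩ := hcard.2 hodd
    have hA0 := hA ⟨0, by omega⟩
    have hub : gamma G ≤ ((S16.codes n t).A ⟨0, by omega⟩).card := upper _ (hdom.1 _)
    have h2 : ((S16.codes n t).A ⟨0, by omega⟩).card ≤ gamma G := by
      by_contra h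
      push_neg at h
      have hmul : (n+1) * (gamma G + 1) ≤ (n+1) * ((S16.codes n t).A ⟨0, by omega⟩).card :=
        Nat.mul_le_mul_left _ h
      rw [hA0, Nat.mul_add, Nat.mul_one] at hmul
      generalize hP : (n+1) * gamma G = P at hmul hlow
      generalize hN : n ^ t = N at hmul hlow
      omega
    rw [show gamma G = ((S16.codes n t).A ⟨0, by omega⟩).card from le_antisymm hub h2]
    exact hA0
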